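/- Define for a partition ν of n the polynomial g_ν(x) = ∏_{i=1}^{n} (x + ν_i − i), where ν_i = 0 for i > ℓ(ν). Then for any partition ν of n ≥ 1, ∑_{λ ∈ ν∖1} g_λ(x)/H_λ = (g_ν(x+1) − g_ν(x))/H_ν as polynomials in x. -/

import Mathlib

open Finset

/-- The content of a box with (0-indexed) row `c.1` and column `c.2`. -/
def boxContent (c : ℕ × ℕ) : ℤ := (c.2 : ℤ) - (c.1 : ℤ)

/-- The hook length of a box `c` in a diagram with set of boxes `s`:
arm length plus leg length plus one. -/
def hook (s : Finset (ℕ × ℕ)) (c : ℕ × ℕ) : ℕ :=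
  (s.filter fun d => d.1 = c.1 ∧ c.2 < d.2).card +
  (s.filter fun d => d.2 = c.2 ∧ c.1 < d.1).card + 1

/-- The product of all hook lengths. -/
def Hprod (s : Finset (ℕ × ℕ)) : ℕ := ∏ c ∈ s, hook s c

/-- The removable corner boxes of a diagram with boxes `s`. -/
def corners (s : Finset (ℕ × ℕ)) : Finset (ℕ × ℕ) :=
  s.filter fun c => (c.1 + 1, c.2) ∉ s ∧ (c.1, c.2 + 1) ∉ s


/-- The length of row `i` (0-indexed) of the diagram with boxes `s`. -/
def rowLenS (s : Finset (ℕ × ℕ)) (i : ℕ) : ℕ := (s.filter fun c => c.1 = i).card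

/-- Han's `g`-function of the diagram with boxes `s` (with `|s|` boxes):
`g(x) = ∏_{i=1}^{|s|} (x + ν_i − i)`, parts padded by zeros. -/
noncomputable def gpoly (s : Finset (ℕ × ℕ)) : Polynomial ℚ :=
  ∏ i ∈ range s.card, (Polynomial.X + Polynomial.C ((rowLenS s i : ℚ) - ((i : ℚ) + 1)))

section Basic
variable (μ : YoungDiagram)

lemma rowLenS_eq (i : ℕ) : rowLenS μ.cells i = μ.rowLen i := by
  rw [YoungDiagram.rowLen_eq_card, rowLenS, YoungDiagram.row]

lemma arm_card (i j : ℕ) :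
    (μ.cells.filter fun d => d.1 = i ∧ j < d.2).card = μ.rowLen i - (j+1) := by
  have : (μ.cells.filter fun d => d.1 = i ∧ j < d.2)
      = (Ico (j+1) (μ.rowLen i)).image (fun j' => (i, j')) := by
    ext d
    simp only [mem_filter, mem_image, mem_Ico, YoungDiagram.mem_cells]
    constructor
    · rintro ⟨hd, h1, h2⟩
      refine ⟨d.2, ⟨h2, ?_⟩, by rw [← h1]⟩
      have : (d.1, d.2) ∈ μ := by rwa [Prod.mk.eta]
      rw [← h1]
      exact YoungDiagram.mem_iff_lt_rowLen.mp this
    · rintro ⟨j', ⟨hj1, hj2⟩, rfl⟩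
      exact ⟨YoungDiagram.mem_iff_lt_rowLen.mpr hj2, rfl, hj1⟩
  rw [this, card_image_of_injective _ (fun a b h => by simpa using h), Nat.card_Ico]

lemma leg_card (i j : ℕ) :
    (μ.cells.filter fun d => d.2 = j ∧ i < d.1).card = μ.colLen j - (i+1) := by
  have : (μ.cells.filter fun d => d.2 = j ∧ i < d.1)
      = (Ico (i+1) (μ.colLen j)).image (fun i' => (i', j)) := by
    ext d
    simp only [mem_filter, mem_image, mem_Ico, YoungDiagram.mem_cells]
    constructor
    · rintro ⟨hd, h1, h2⟩
      refine ⟨d.1, ⟨h2, ?_⟩, by rw [← h1]⟩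
      have : (d.1, j) ∈ μ := by rwa [← h1, Prod.mk.eta]
      exact YoungDiagram.mem_iff_lt_colLen.mp this
    · rintro ⟨i', ⟨hi1, hi2⟩, rfl⟩
      exact ⟨YoungDiagram.mem_iff_lt_colLen.mpr hi2, rfl, hi1⟩
  rw [this, card_image_of_injective _ (fun a b h => by simpa using h), Nat.card_Ico]

lemma hook_eq (i j : ℕ) :
    hook μ.cells (i, j) = (μ.rowLen i - (j+1)) + (μ.colLen j - (i+1)) + 1 := by
  rw [hook, arm_card, leg_card]

end Basic

section Corner
variable {μ : YoungDiagram} {r q : ℕ}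

lemma corner_iff {c : ℕ × ℕ} :
    c ∈ corners μ.cells ↔ c ∈ μ ∧ (c.1 + 1, c.2) ∉ μ ∧ (c.1, c.2 + 1) ∉ μ := by
  simp [corners, mem_filter, YoungDiagram.mem_cells]

lemma corner_mem (hc : (r, q) ∈ corners μ.cells) : (r, q) ∈ μ := (corner_iff.mp hc).1

lemma corner_rowLen (hc : (r, q) ∈ corners μ.cells) : μ.rowLen r = q + 1 := by
  obtain ⟨h1, _, h3⟩ := corner_iff.mp hc
  have := YoungDiagram.mem_iff_lt_rowLen.mp h1
  have h3' : ¬ (q + 1 < μ.rowLen r) := fun h => h3 (YoungDiagram.mem_iff_lt_rowLen.mpr h)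
  omega

lemma corner_colLen (hc : (r, q) ∈ corners μ.cells) : μ.colLen q = r + 1 := by
  obtain ⟨h1, h2, _⟩ := corner_iff.mp hc
  have := YoungDiagram.mem_iff_lt_colLen.mp h1
  have h2' : ¬ (r + 1 < μ.colLen q) := fun h => h2 (YoungDiagram.mem_iff_lt_colLen.mpr h)
  omega

lemma corner_rowLen_succ (hc : (r, q) ∈ corners μ.cells) : μ.rowLen (r + 1) ≤ q := by
  obtain ⟨_, h2, _⟩ := corner_iff.mp hc
  have : ¬ (q < μ.rowLen (r+1)) := fun h => h2 (YoungDiagram.mem_iff_lt_rowLen.mpr h)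
  omega

lemma colLen_le_card (μ : YoungDiagram) : μ.colLen 0 ≤ μ.cells.card := by
  rw [YoungDiagram.colLen_eq_card]
  exact card_le_card (filter_subset _ _)

lemma colLen_le_colLen_zero (μ : YoungDiagram) (j : ℕ) : μ.colLen j ≤ μ.colLen 0 :=
  μ.colLen_anti 0 j (Nat.zero_le j)

lemma card_eq_sum_rowLens (μ : YoungDiagram) {N : ℕ} (hN : μ.colLen 0 ≤ N) :
    μ.cells.card = ∑ i ∈ range N, μ.rowLen i := by
  have hcells : μ.cells = (range N).biUnion (fun i => μ.row i) := by
    ext d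
    simp only [mem_biUnion, mem_range, YoungDiagram.mem_row_iff, YoungDiagram.mem_cells]
    constructor
    · intro hd
      refine ⟨d.1, ?_, hd, rfl⟩
      have : (d.1, d.2) ∈ μ := by rwa [Prod.mk.eta]
      have h1 := YoungDiagram.mem_iff_lt_colLen.mp this
      have h2 := μ.colLen_anti 0 d.2 (Nat.zero_le _)
      omega
    · rintro ⟨i, _, hd, _⟩; exact hd
  rw [hcells, card_biUnion]
  · exact Finset.sum_congr rfl fun i _ => (μ.rowLen_eq_card (i := i)).symm
  · intro x _ y _ hxy
    simp only [disjoint_left, YoungDiagram.mem_row_iff]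
    rintro d ⟨_, h1⟩ ⟨_, h2⟩
    exact hxy (h1 ▸ h2 ▸ rfl)

lemma rowLenS_erase (hc : (r, q) ∈ corners μ.cells) (i : ℕ) :
    rowLenS (μ.cells.erase (r, q)) i = if i = r then q else μ.rowLen i := by
  rw [rowLenS, filter_erase]
  split_ifs with h
  · subst h
    rw [card_erase_of_mem (by simp [mem_filter, YoungDiagram.mem_cells, corner_mem hc]),
      ← rowLenS, rowLenS_eq, corner_rowLen hc]
    omega
  · rw [erase_eq_of_notMem (by simp [mem_filter]; intro _ h'; exact h h'.symm), ← rowLenS,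
      rowLenS_eq]

lemma hook_erase (hc : (r, q) ∈ corners μ.cells) (d : ℕ × ℕ) (hd : d ∈ μ.cells.erase (r, q)) :
    hook (μ.cells.erase (r, q)) d
      = hook μ.cells d - (if (d.1 = r ∧ d.2 < q) ∨ (d.2 = q ∧ d.1 < r) then 1 else 0) := by
  have harm : ((μ.cells.erase (r, q)).filter fun e => e.1 = d.1 ∧ d.2 < e.2).card
      = (μ.cells.filter fun e => e.1 = d.1 ∧ d.2 < e.2).card
        - (if d.1 = r ∧ d.2 < q then 1 else 0) := by
    rw [filter_erase]
    split_ifs with h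
    · rw [card_erase_of_mem]
      simp only [mem_filter, YoungDiagram.mem_cells]
      exact ⟨corner_mem hc, h.1.symm, h.2⟩
    · rw [erase_eq_of_notMem
        (fun hm => h ⟨(mem_filter.mp hm).2.1.symm, (mem_filter.mp hm).2.2⟩)]
      omega
  have hleg : ((μ.cells.erase (r, q)).filter fun e => e.2 = d.2 ∧ d.1 < e.1).card
      = (μ.cells.filter fun e => e.2 = d.2 ∧ d.1 < e.1).card
        - (if d.2 = q ∧ d.1 < r then 1 else 0) := by
    rw [filter_erase]
    split_ifs with h
    · rw [card_erase_of_mem]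
      simp only [mem_filter, YoungDiagram.mem_cells]
      exact ⟨corner_mem hc, h.1.symm, h.2⟩
    · rw [erase_eq_of_notMem
        (fun hm => h ⟨(mem_filter.mp hm).2.1.symm, (mem_filter.mp hm).2.2⟩)]
      omega
  rw [hook, hook, harm, hleg]
  by_cases h1 : d.1 = r ∧ d.2 < q
  · have harm_pos : 1 ≤ (μ.cells.filter fun e => e.1 = d.1 ∧ d.2 < e.2).card := by
      refine Finset.card_pos.mpr ⟨(r, q), ?_⟩
      simp only [mem_filter, YoungDiagram.mem_cells]
      exact ⟨corner_mem hc, h1.1.symm, h1.2⟩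
    have h2 : ¬ (d.2 = q ∧ d.1 < r) := by omega
    rw [if_pos h1, if_neg h2, if_pos (Or.inl h1)]
    omega
  · by_cases h2 : d.2 = q ∧ d.1 < r
    · have hleg_pos : 1 ≤ (μ.cells.filter fun e => e.2 = d.2 ∧ d.1 < e.1).card := by
        refine Finset.card_pos.mpr ⟨(r, q), ?_⟩
        simp only [mem_filter, YoungDiagram.mem_cells]
        exact ⟨corner_mem hc, h2.1.symm, h2.2⟩
      rw [if_pos h2, if_neg h1, if_pos (Or.inr h2)]
      omega
    · rw [if_neg h1, if_neg h2, if_neg (by tauto)]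
      omega

end Corner

section Staircase
variable {μ : YoungDiagram} {r q : ℕ}

/-- `β`-number: first-column hook length with diagram padded to `n = |μ|` rows. -/
def Bn (μ : YoungDiagram) (l : ℕ) : ℕ := μ.rowLen l + (μ.cells.card - 1 - l)

/-- Complementary positions. -/
def Fn (μ : YoungDiagram) (j : ℕ) : ℕ := μ.cells.card + j - μ.colLen j

lemma colLen_le_n (μ : YoungDiagram) (j : ℕ) : μ.colLen j ≤ μ.cells.card :=
  (colLen_le_colLen_zero μ j).trans (colLen_le_card μ)

lemma Fn_strictMono (μ : YoungDiagram) : StrictMono (Fn μ) := by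
  apply strictMono_nat_of_lt_succ
  intro j
  have h1 := colLen_le_n μ j
  have h2 := colLen_le_n μ (j+1)
  have h3 := μ.colLen_anti j (j+1) (by omega)
  unfold Fn
  omega

lemma Bn_lt_Bn (μ : YoungDiagram) {l1 l2 : ℕ} (h : l1 < l2) (h2 : l2 < μ.cells.card) :
    Bn μ l2 < Bn μ l1 := by
  have := μ.rowLen_anti l1 l2 (le_of_lt h)
  unfold Bn
  omega

lemma corner_r_lt_n (hc : (r, q) ∈ corners μ.cells) : r < μ.cells.card := by
  have h1 := corner_colLen hc
  have := colLen_le_n μ q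
  omega

lemma corner_colLen_ge (hc : (r, q) ∈ corners μ.cells) {j : ℕ} (hj : j ≤ q) :
    r + 1 ≤ μ.colLen j := by
  rw [← corner_colLen hc]
  exact μ.colLen_anti j q hj

lemma hook_row_val (hc : (r, q) ∈ corners μ.cells) {j : ℕ} (hj : j ≤ q) :
    hook μ.cells (r, j) = Bn μ r - Fn μ j := by
  rw [hook_eq, corner_rowLen hc]
  have h1 := colLen_le_n μ j
  have h2 := corner_colLen_ge hc hj
  have h3 := corner_r_lt_n hc
  unfold Bn Fn
  rw [corner_rowLen hc]
  omega

lemma Fn_lt_Bn_r (hc : (r, q) ∈ corners μ.cells) {j : ℕ} (hj : j ≤ q) :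
    Fn μ j < Bn μ r := by
  have h1 : Fn μ j ≤ Fn μ q := (Fn_strictMono μ).monotone hj
  have h2 := corner_colLen hc
  have h3 := corner_rowLen hc
  have h4 := corner_r_lt_n hc
  have h5 := colLen_le_n μ q
  unfold Fn at h1 ⊢
  unfold Bn
  rw [h3]
  omega

lemma Fn_q_eq (hc : (r, q) ∈ corners μ.cells) : Fn μ q = Bn μ r - 1 := by
  have h2 := corner_colLen hc
  have h3 := corner_rowLen hc
  have h4 := corner_r_lt_n hc
  unfold Fn Bn
  rw [h2, h3]
  omega

lemma Bn_le_Bn_r (hc : (r, q) ∈ corners μ.cells) {l : ℕ}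
    (hl : l ∈ Ico (r+1) μ.cells.card) : Bn μ l + 2 ≤ Bn μ r := by
  rw [mem_Ico] at hl
  have h1 := μ.rowLen_anti (r+1) l hl.1
  have h2 := corner_rowLen_succ hc
  have h3 := corner_rowLen hc
  have h4 := corner_r_lt_n hc
  unfold Bn
  omega

lemma Fn_ne_Bn (μ : YoungDiagram) {j l : ℕ} (hl : l < μ.cells.card) :
    Fn μ j ≠ Bn μ l := by
  have h1 := colLen_le_n μ j
  by_cases hm : (l, j) ∈ μ
  · have h2 := YoungDiagram.mem_iff_lt_rowLen.mp hm
    have h3 := YoungDiagram.mem_iff_lt_colLen.mp hm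
    unfold Fn Bn
    omega
  · have h2 : μ.rowLen l ≤ j := by
      by_contra hh
      exact hm (YoungDiagram.mem_iff_lt_rowLen.mpr (by omega))
    have h3 : μ.colLen j ≤ l := by
      by_contra hh
      exact hm (YoungDiagram.mem_iff_lt_colLen.mpr (by omega))
    unfold Fn Bn
    omega

lemma stair_disjoint (hc : (r, q) ∈ corners μ.cells) {m : ℕ} (hm : m ≤ q + 1) :
    Disjoint ((range m).image (Fn μ)) ((Ico (r+1) μ.cells.card).image (Bn μ)) := by
  rw [disjoint_left]
  rintro x hx1 hx2
  obtain ⟨j, hj, rfl⟩ := mem_image.mp hx1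
  obtain ⟨l, hl, heq⟩ := mem_image.mp hx2
  exact Fn_ne_Bn μ (mem_Ico.mp hl).2 heq.symm

lemma stair_union (hc : (r, q) ∈ corners μ.cells) :
    ((range (q+1)).image (Fn μ)) ∪ ((Ico (r+1) μ.cells.card).image (Bn μ))
      = range (Bn μ r) := by
  have hrn := corner_r_lt_n hc
  apply Finset.eq_of_subset_of_card_le
  · intro x hx
    rw [mem_union] at hx
    rw [mem_range]
    rcases hx with hx | hx
    · obtain ⟨j, hj, rfl⟩ := mem_image.mp hx
      exact Fn_lt_Bn_r hc (by rw [mem_range] at hj; omega)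
    · obtain ⟨l, hl, rfl⟩ := mem_image.mp hx
      have := Bn_le_Bn_r hc hl
      omega
  · rw [card_union_of_disjoint (stair_disjoint hc le_rfl), card_range,
      card_image_of_injective _ (Fn_strictMono μ).injective, card_range]
    have hinj : Set.InjOn (Bn μ) (Ico (r+1) μ.cells.card) := by
      intro l1 h1 l2 h2 heq
      rw [coe_Ico, Set.mem_Ico] at h1 h2
      by_contra hne
      rcases Nat.lt_or_ge l1 l2 with h | h
      · have := Bn_lt_Bn μ h h2.2
        omega
      · have hlt : l2 < l1 := by omega
        have := Bn_lt_Bn μ hlt h1.2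
        omega
    rw [card_image_of_injOn hinj, Nat.card_Ico]
    have h2 := corner_colLen hc
    have h3 := corner_rowLen hc
    unfold Bn
    rw [h3]
    omega

lemma stair_union' (hc : (r, q) ∈ corners μ.cells) :
    ((range q).image (Fn μ)) ∪ ((Ico (r+1) μ.cells.card).image (Bn μ))
      = range (Bn μ r - 1) := by
  have h1 := stair_union hc
  rw [Finset.range_add_one, image_insert, Fn_q_eq hc] at h1
  have hBpos : 1 ≤ Bn μ r := by
    have := Fn_lt_Bn_r hc (le_refl q); omega
  have h2 : range (Bn μ r) = insert (Bn μ r - 1) (range (Bn μ r - 1)) := by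
    have : Bn μ r = (Bn μ r - 1) + 1 := by omega
    rw [this, Finset.range_add_one]
    congr 1 <;> omega
  rw [h2, insert_union] at h1
  have hnot1 : Bn μ r - 1 ∉ (range q).image (Fn μ) ∪ (Ico (r+1) μ.cells.card).image (Bn μ) := by
    rw [mem_union]
    rintro (hx | hx)
    · obtain ⟨j, hj, heq⟩ := mem_image.mp hx
      rw [mem_range] at hj
      have h5 := Fn_strictMono μ (show j < q by omega)
      have h6 := Fn_q_eq hc
      omega
    · obtain ⟨l, hl, heq⟩ := mem_image.mp hx
      have := Bn_le_Bn_r hc hl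
      omega
  have hnot2 : Bn μ r - 1 ∉ range (Bn μ r - 1) := by simp
  have h7 := congrArg (fun s => Finset.erase s (Bn μ r - 1)) h1
  simp only [Finset.erase_insert hnot1, Finset.erase_insert hnot2] at h7
  exact h7

end Staircase

section Key
variable {μ : YoungDiagram} {r q : ℕ}

/-- Shifted content `a_i = ν_i - i` (0-indexed: `rowLen i - i - 1`) as a rational. -/
def Aq (μ : YoungDiagram) (l : ℕ) : ℚ := (μ.rowLen l : ℚ) - (l : ℚ) - 1

lemma hook_one_le (s : Finset (ℕ × ℕ)) (c : ℕ × ℕ) : 1 ≤ hook s c := Nat.le_add_left 1 _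

lemma hook_col_val (hc : (r, q) ∈ corners μ.cells) {i : ℕ} (hi : i < r) :
    hook μ.cells (i, q) + q + i = μ.rowLen i + r := by
  rw [hook_eq, corner_colLen hc]
  have h1 : q + 1 ≤ μ.rowLen i := by
    rw [← corner_rowLen hc]; exact μ.rowLen_anti i r (le_of_lt hi)
  omega

lemma hook_corner_one (hc : (r, q) ∈ corners μ.cells) : hook μ.cells (r, q) = 1 := by
  rw [hook_eq, corner_rowLen hc, corner_colLen hc]; omega

lemma prod_range_sub_factorial (B : ℕ) : ∏ m ∈ range B, (B - m) = Nat.factorial B := by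
  rw [← Finset.prod_range_add_one_eq_factorial, ← Finset.prod_range_reflect (fun j => j + 1) B]
  exact Finset.prod_congr rfl fun m hm => by rw [mem_range] at hm; omega

lemma Bn_injOn (μ : YoungDiagram) {s t : ℕ} :
    ∀ x ∈ Ico s μ.cells.card, ∀ y ∈ Ico t μ.cells.card, Bn μ x = Bn μ y → x = y := by
  intro x hx y hy h
  by_contra hne
  rcases Nat.lt_or_ge x y with hlt | hge
  · have := Bn_lt_Bn μ hlt (mem_Ico.mp hy).2; omega
  · have hlt : y < x := by omega
    have := Bn_lt_Bn μ hlt (mem_Ico.mp hx).2; omega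

lemma row_prod_a (hc : (r, q) ∈ corners μ.cells) :
    (∏ j ∈ range (q+1), hook μ.cells (r, j)) *
      (∏ l ∈ Ico (r+1) μ.cells.card, (Bn μ r - Bn μ l)) = Nat.factorial (Bn μ r) := by
  rw [← prod_range_sub_factorial, ← stair_union hc,
    prod_union (stair_disjoint hc le_rfl),
    prod_image (fun x _ y _ h => (Fn_strictMono μ).injective h),
    prod_image (Bn_injOn μ)]
  congr 1
  refine prod_congr rfl fun j hj => ?_
  rw [mem_range] at hj
  exact hook_row_val hc (by omega)

lemma row_prod_b (hc : (r, q) ∈ corners μ.cells) :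
    (∏ j ∈ range q, (hook μ.cells (r, j) - 1)) *
      (∏ l ∈ Ico (r+1) μ.cells.card, (Bn μ r - Bn μ l - 1)) = Nat.factorial (Bn μ r - 1) := by
  rw [← prod_range_sub_factorial, ← stair_union' hc,
    prod_union (stair_disjoint hc (by omega)),
    prod_image (fun x _ y _ h => (Fn_strictMono μ).injective h),
    prod_image (Bn_injOn μ)]
  congr 1
  · refine prod_congr rfl fun j hj => ?_
    rw [mem_range] at hj
    have h1 := hook_row_val hc (show j ≤ q by omega)
    have h2 := Fn_lt_Bn_r hc (show j ≤ q by omega)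
    omega
  · exact prod_congr rfl fun l hl => by omega

end Key

section KeyRatio
variable {μ : YoungDiagram} {r q : ℕ}

lemma key_ratio (hc : (r, q) ∈ corners μ.cells) :
    (Hprod μ.cells : ℚ) * ∏ l ∈ (range μ.cells.card).erase r, (Aq μ r - Aq μ l)
      = (Hprod (μ.cells.erase (r, q)) : ℚ) * (Bn μ r) *
          ∏ l ∈ (range μ.cells.card).erase r, (Aq μ r - Aq μ l - 1) := by
  set n := μ.cells.card with hn
  have hrn : r < n := corner_r_lt_n hc
  have hmem : (r, q) ∈ μ.cells := (YoungDiagram.mem_cells _).mpr (corner_mem hc)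
  have hρr := corner_rowLen hc
  -- index split
  have hsplit : (range n).erase r = range r ∪ Ico (r+1) n := by
    ext x
    simp only [mem_erase, mem_union, mem_range, mem_Ico]
    omega
  have hdisjsplit : Disjoint (range r) (Ico (r+1) n) := by
    rw [disjoint_left]
    intro x hx1 hx2
    rw [mem_range] at hx1
    rw [mem_Ico] at hx2
    omega
  -- box sets
  set Rrow := (range q).image (fun j => (r, j)) with hRrow
  set Ccol := (range r).image (fun i => (i, q)) with hCcol
  have hmemrow : ∀ j, j < q → (r, j) ∈ μ.cells.erase (r, q) := by
    intro j hj
    rw [mem_erase]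
    constructor
    · simp only [ne_eq, Prod.mk.injEq]; omega
    · exact (YoungDiagram.mem_cells _).mpr (μ.up_left_mem le_rfl (by omega) (corner_mem hc))
  have hmemcol : ∀ i, i < r → (i, q) ∈ μ.cells.erase (r, q) := by
    intro i hi
    rw [mem_erase]
    constructor
    · simp only [ne_eq, Prod.mk.injEq]; omega
    · exact (YoungDiagram.mem_cells _).mpr (μ.up_left_mem (by omega) le_rfl (corner_mem hc))
  have hRCsub : Rrow ∪ Ccol ⊆ μ.cells.erase (r, q) := by
    intro d hd
    rw [mem_union] at hd
    rcases hd with hd | hd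
    · obtain ⟨j, hj, rfl⟩ := mem_image.mp hd
      exact hmemrow j (mem_range.mp hj)
    · obtain ⟨i, hi, rfl⟩ := mem_image.mp hd
      exact hmemcol i (mem_range.mp hi)
  have hdisjRC : Disjoint Rrow Ccol := by
    rw [disjoint_left]
    intro d hd1 hd2
    obtain ⟨j, hj, rfl⟩ := mem_image.mp hd1
    obtain ⟨i, hi, heq⟩ := mem_image.mp hd2
    rw [mem_range] at hj hi
    rw [Prod.mk.injEq] at heq
    omega
  have hinjrow : ∀ x ∈ range q, ∀ y ∈ range q, (fun j => (r, j)) x = (fun j => (r, j)) y → x = y := by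
    intro x _ y _ h
    simpa using h
  have hinjcol : ∀ x ∈ range r, ∀ y ∈ range r, (fun i => (i, q)) x = (fun i => (i, q)) y → x = y := by
    intro x _ y _ h
    simpa using h
  have hdecomp : ∀ f : ℕ × ℕ → ℚ, ∏ d ∈ μ.cells.erase (r, q), f d
      = (∏ j ∈ range q, f (r, j)) * (∏ i ∈ range r, f (i, q)) *
        (∏ d ∈ (μ.cells.erase (r, q)) \ (Rrow ∪ Ccol), f d) := by
    intro f
    rw [← prod_sdiff hRCsub, prod_union hdisjRC, prod_image hinjrow, prod_image hinjcol]
    ring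
  -- hooks on the rest are unchanged
  have hrest : ∀ d ∈ (μ.cells.erase (r, q)) \ (Rrow ∪ Ccol),
      hook (μ.cells.erase (r, q)) d = hook μ.cells d := by
    intro d hd
    rw [mem_sdiff] at hd
    obtain ⟨hd1, hd2⟩ := hd
    rw [hook_erase hc d hd1, if_neg, Nat.sub_zero]
    rintro (⟨ha, hb⟩ | ⟨ha, hb⟩)
    · exact hd2 (mem_union.mpr (Or.inl (mem_image.mpr ⟨d.2, mem_range.mpr hb, by rw [← ha]⟩)))
    · exact hd2 (mem_union.mpr (Or.inr (mem_image.mpr ⟨d.1, mem_range.mpr hb, by rw [← ha]⟩)))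
  -- decompose Hν
  have hHν : (Hprod μ.cells : ℚ)
      = (∏ j ∈ range q, (hook μ.cells (r, j) : ℚ)) *
        (∏ i ∈ range r, (hook μ.cells (i, q) : ℚ)) *
        (∏ d ∈ (μ.cells.erase (r, q)) \ (Rrow ∪ Ccol), (hook μ.cells d : ℚ)) := by
    rw [Hprod, Nat.cast_prod, ← Finset.mul_prod_erase _ _ hmem, hook_corner_one hc,
      hdecomp (fun d => (hook μ.cells d : ℚ))]
    push_cast
    ring
  -- decompose Hλ
  have hHlam : (Hprod (μ.cells.erase (r, q)) : ℚ)
      = (∏ j ∈ range q, ((hook μ.cells (r, j) : ℚ) - 1)) *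
        (∏ i ∈ range r, ((hook μ.cells (i, q) : ℚ) - 1)) *
        (∏ d ∈ (μ.cells.erase (r, q)) \ (Rrow ∪ Ccol), (hook μ.cells d : ℚ)) := by
    rw [Hprod, Nat.cast_prod, hdecomp (fun d => (hook (μ.cells.erase (r, q)) d : ℚ))]
    congr 1
    · congr 1
      · refine prod_congr rfl fun j hj => ?_
        rw [mem_range] at hj
        rw [hook_erase hc (r, j) (hmemrow j hj), if_pos (Or.inl ⟨rfl, hj⟩),
          Nat.cast_sub (hook_one_le _ _)]
        norm_num
      · refine prod_congr rfl fun i hi => ?_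
        rw [mem_range] at hi
        rw [hook_erase hc (i, q) (hmemcol i hi), if_pos (Or.inr ⟨rfl, hi⟩),
          Nat.cast_sub (hook_one_le _ _)]
        norm_num
    · exact prod_congr rfl fun d hd => by rw [hrest d hd]
  -- cast facts
  have hcast_pad : ∀ l : ℕ, l < n → ((n - 1 - l : ℕ) : ℚ) = (n : ℚ) - 1 - l := by
    intro l hl
    rw [Nat.cast_sub (by omega), Nat.cast_sub (by omega)]
    push_cast
    ring
  have hBnq : ∀ l : ℕ, l < n → (Bn μ l : ℚ) = Aq μ l + n := by
    intro l hl
    unfold Bn Aq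
    rw [Nat.cast_add, hcast_pad l hl]
    ring
  have hIcoCast : ∀ l ∈ Ico (r+1) n, ((Bn μ r - Bn μ l : ℕ) : ℚ) = Aq μ r - Aq μ l := by
    intro l hl
    have h2 := Bn_le_Bn_r hc hl
    have hl2 := mem_Ico.mp hl
    rw [Nat.cast_sub (by omega), hBnq r hrn, hBnq l hl2.2]
    ring
  have hIcoCast' : ∀ l ∈ Ico (r+1) n, ((Bn μ r - Bn μ l - 1 : ℕ) : ℚ) = Aq μ r - Aq μ l - 1 := by
    intro l hl
    have h2 := Bn_le_Bn_r hc hl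
    have hl2 := mem_Ico.mp hl
    rw [Nat.cast_sub (by omega), Nat.cast_sub (by omega), hBnq r hrn, hBnq l hl2.2]
    ring
  have hBr1 : 1 ≤ Bn μ r := by unfold Bn; omega
  -- row equation E2
  have hE2 : (∏ j ∈ range q, (hook μ.cells (r, j) : ℚ)) * (∏ l ∈ Ico (r+1) n, (Aq μ r - Aq μ l))
      = (Bn μ r : ℚ) * ((∏ j ∈ range q, ((hook μ.cells (r, j) : ℚ) - 1)) *
          (∏ l ∈ Ico (r+1) n, (Aq μ r - Aq μ l - 1))) := by
    have ha : (∏ j ∈ range q, (hook μ.cells (r, j) : ℚ)) *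
        (∏ l ∈ Ico (r+1) n, (Aq μ r - Aq μ l)) = (Nat.factorial (Bn μ r) : ℚ) := by
      rw [← prod_congr rfl hIcoCast, ← Nat.cast_prod, ← Nat.cast_prod, ← Nat.cast_mul]
      rw [← row_prod_a hc]
      congr 2
      rw [prod_range_succ, hook_corner_one hc, mul_one]
    have hb : (∏ j ∈ range q, ((hook μ.cells (r, j) : ℚ) - 1)) *
        (∏ l ∈ Ico (r+1) n, (Aq μ r - Aq μ l - 1)) = (Nat.factorial (Bn μ r - 1) : ℚ) := by
      have hcast1 : ∏ j ∈ range q, ((hook μ.cells (r, j) : ℚ) - 1)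
          = ((∏ j ∈ range q, (hook μ.cells (r, j) - 1) : ℕ) : ℚ) := by
        rw [Nat.cast_prod]
        exact prod_congr rfl fun j hj => by
          rw [Nat.cast_sub (hook_one_le _ _)]; norm_num
      rw [← prod_congr rfl hIcoCast', ← Nat.cast_prod, hcast1, ← Nat.cast_mul, row_prod_b hc]
    rw [ha, hb, ← Nat.cast_mul]
    congr 1
    conv_lhs => rw [show Bn μ r = (Bn μ r - 1) + 1 by omega]
    rw [Nat.factorial_succ]
    congr 1
    omega
  -- column equation E1
  have hE1 : (∏ i ∈ range r, (hook μ.cells (i, q) : ℚ)) * (∏ l ∈ range r, (Aq μ r - Aq μ l))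
      = (∏ i ∈ range r, ((hook μ.cells (i, q) : ℚ) - 1)) *
        (∏ l ∈ range r, (Aq μ r - Aq μ l - 1)) := by
    rw [← prod_mul_distrib, ← prod_mul_distrib]
    refine prod_congr rfl fun i hi => ?_
    rw [mem_range] at hi
    have h1 := hook_col_val hc hi
    have h2 : (hook μ.cells (i, q) : ℚ) = Aq μ i - Aq μ r + 1 := by
      have := congrArg (Nat.cast : ℕ → ℚ) h1
      push_cast at this
      unfold Aq
      rw [hρr] at *
      push_cast at this ⊢
      linarith
    rw [h2]
    unfold Aq
    ring
  -- assemble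
  rw [hsplit, prod_union hdisjsplit, prod_union hdisjsplit, hHν, hHlam]
  set Pr := ∏ j ∈ range q, (hook μ.cells (r, j) : ℚ)
  set Pc := ∏ i ∈ range r, (hook μ.cells (i, q) : ℚ)
  set Pr' := ∏ j ∈ range q, ((hook μ.cells (r, j) : ℚ) - 1)
  set Pc' := ∏ i ∈ range r, ((hook μ.cells (i, q) : ℚ) - 1)
  set Rt := ∏ d ∈ (μ.cells.erase (r, q)) \ (Rrow ∪ Ccol), (hook μ.cells d : ℚ)
  set Cr := ∏ l ∈ range r, (Aq μ r - Aq μ l)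
  set CI := ∏ l ∈ Ico (r+1) n, (Aq μ r - Aq μ l)
  set Cr' := ∏ l ∈ range r, (Aq μ r - Aq μ l - 1)
  set CI' := ∏ l ∈ Ico (r+1) n, (Aq μ r - Aq μ l - 1)
  linear_combination (Rt * Pc * Cr) * hE2 + (Rt * (Bn μ r : ℚ) * Pr' * CI') * hE1

end KeyRatio

section Poly
open Polynomial

/-- Lagrange-type weight. -/
noncomputable def wt (s : Finset ℕ) (a : ℕ → ℚ) (k : ℕ) : ℚ :=
  ∏ j ∈ s.erase k, (a k - a j - 1) / (a k - a j)

lemma prodlin_monic (s : Finset ℕ) (a : ℕ → ℚ) :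
    (∏ j ∈ s, (X + C (a j))).Monic :=
  monic_prod_of_monic _ _ fun j _ => monic_X_add_C (a j)

lemma prodlin_natDegree (s : Finset ℕ) (a : ℕ → ℚ) :
    (∏ j ∈ s, (X + C (a j))).natDegree = s.card := by
  rw [natDegree_prod_of_monic _ _ fun j _ => monic_X_add_C (a j)]
  simp [natDegree_X_add_C]

lemma prodlin_coeff_card (s : Finset ℕ) (a : ℕ → ℚ) :
    (∏ j ∈ s, (X + C (a j))).coeff s.card = 1 := by
  have h := (prodlin_monic s a).coeff_natDegree
  rwa [prodlin_natDegree] at h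

lemma coeff_X_add_C_mul (c : ℚ) (p : ℚ[X]) (k : ℕ) :
    ((X + C c) * p).coeff (k + 1) = p.coeff k + c * p.coeff (k + 1) := by
  rw [add_mul, coeff_add, coeff_X_mul, coeff_C_mul]

lemma prodlin_coeff_pred (s : Finset ℕ) (a : ℕ → ℚ) (hs : s.Nonempty) :
    (∏ j ∈ s, (X + C (a j))).coeff (s.card - 1) = ∑ j ∈ s, a j := by
  induction s using Finset.induction_on with
  | empty => exact absurd hs (by simp)
  | insert i s hi ih =>
    rcases s.eq_empty_or_nonempty with rfl | hne
    · simp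
    · rw [prod_insert hi, sum_insert hi, card_insert_of_notMem hi]
      obtain ⟨m, hm⟩ : ∃ m, s.card = m + 1 := ⟨s.card - 1, by
        have := Finset.card_pos.mpr hne; omega⟩
      rw [hm]
      have : m + 1 + 1 - 1 = m + 1 := rfl
      rw [this, coeff_X_add_C_mul]
      rw [show m = s.card - 1 by omega] at *
      rw [ih hne, ← hm, prodlin_coeff_card]
      ring

/-- The difference polynomial. -/
noncomputable def Dpoly (s : Finset ℕ) (a : ℕ → ℚ) : ℚ[X] :=
  (∏ j ∈ s, (X + C (a j + 1))) - ∏ j ∈ s, (X + C (a j))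

lemma Dpoly_coeff_card (s : Finset ℕ) (a : ℕ → ℚ) : (Dpoly s a).coeff s.card = 0 := by
  rw [Dpoly, coeff_sub, prodlin_coeff_card, prodlin_coeff_card, sub_self]

lemma Dpoly_coeff_top (s : Finset ℕ) (a : ℕ → ℚ) (hs : s.Nonempty) :
    (Dpoly s a).coeff (s.card - 1) = s.card := by
  rw [Dpoly, coeff_sub, prodlin_coeff_pred s _ hs, prodlin_coeff_pred s a hs]
  rw [Finset.sum_add_distrib]
  simp

lemma Dpoly_coeff_second (s : Finset ℕ) (a : ℕ → ℚ) (hs : 2 ≤ s.card) :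
    (Dpoly s a).coeff (s.card - 2)
      = ((s.card : ℚ) - 1) * (∑ j ∈ s, a j) + (s.card : ℚ) * ((s.card : ℚ) - 1) / 2 := by
  induction s using Finset.induction_on with
  | empty => simp at hs
  | insert i s hi ih =>
    rw [card_insert_of_notMem hi] at hs ⊢
    have hD : Dpoly (insert i s) a = (X + C (a i)) * Dpoly s a + ∏ j ∈ s, (X + C (a j + 1)) := by
      rw [Dpoly, Dpoly, prod_insert hi, prod_insert hi,
        show C (a i + 1) = C (a i) + 1 by rw [map_add, map_one]]
      ring
    rcases Nat.lt_or_ge s.card 2 with hlt | hge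
    · -- s.card = 1
      have hcard : s.card = 1 := by omega
      obtain ⟨j, hj⟩ := Finset.card_eq_one.mp hcard
      subst hj
      have hij : i ∉ ({j} : Finset ℕ) := hi
      rw [hD]
      have : (1:ℕ) + 1 - 2 = 0 := rfl
      rw [hcard, this, coeff_add, coeff_zero_eq_eval_zero, coeff_zero_eq_eval_zero]
      simp only [Dpoly, prod_singleton, sum_insert hij, sum_singleton, card_insert_of_notMem hij,
        card_singleton, eval_mul, eval_add, eval_X, eval_C, eval_sub]
      push_cast
      ring
    · -- s.card ≥ 2
      have hne : s.Nonempty := Finset.card_pos.mp (by omega)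
      obtain ⟨m, hm⟩ : ∃ m, s.card = m + 2 := ⟨s.card - 2, by omega⟩
      rw [hD, hm]
      have h1 : m + 2 + 1 - 2 = (m + 1 - 1) + 1 := by omega
      have h2 : m + 1 - 1 = m := rfl
      rw [h1, h2, coeff_add, coeff_X_add_C_mul]
      have hcs : (Dpoly s a).coeff m = (Dpoly s a).coeff (s.card - 2) := by
        rw [hm]; norm_num
      have hct : (Dpoly s a).coeff (m + 1) = (Dpoly s a).coeff (s.card - 1) := by
        congr 1; omega
      rw [hcs, hct, ih hge, Dpoly_coeff_top s a hne]
      have hcp : (∏ j ∈ s, (X + C (a j + 1))).coeff (m + 1)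
          = ∑ j ∈ s, (a j + 1) := by
        have := prodlin_coeff_pred s (fun j => a j + 1) hne
        rwa [hm, show m + 2 - 1 = m + 1 from rfl] at this
      rw [hcp, sum_insert hi, hm, Finset.sum_add_distrib, Finset.sum_const, nsmul_eq_mul, hm]
      push_cast
      ring

end Poly

section LagrangeSec
open Polynomial

lemma lagrange_decomp (s : Finset ℕ) (a : ℕ → ℚ) (ha : Set.InjOn a ↑s) :
    Dpoly s a = ∑ k ∈ s, C (wt s a k) * ∏ j ∈ s.erase k, (X + C (a j)) := by
  have hv : Set.InjOn (fun k => -(a k)) ↑s := fun x hx y hy h => ha hx hy (by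
    simpa using congrArg Neg.neg h)
  have hmon1 : (∏ j ∈ s, (X + C (a j + 1))).Monic := prodlin_monic s _
  have hmon2 := prodlin_monic s a
  have hdeg1 : (∏ j ∈ s, (X + C (a j + 1))).degree = (s.card : WithBot ℕ) := by
    rw [degree_eq_natDegree hmon1.ne_zero, prodlin_natDegree]
  have hdeg2 : (∏ j ∈ s, (X + C (a j))).degree = (s.card : WithBot ℕ) := by
    rw [degree_eq_natDegree hmon2.ne_zero, prodlin_natDegree]
  have hdeg : (Dpoly s a).degree < (s.card : WithBot ℕ) := by
    rw [Dpoly, ← hdeg1]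
    exact degree_sub_lt (hdeg1.trans hdeg2.symm) hmon1.ne_zero
      (by rw [hmon1.leadingCoeff, hmon2.leadingCoeff])
  have hinterp := Lagrange.eq_interpolate (v := fun k => -(a k)) hv hdeg
  rw [Lagrange.interpolate_apply] at hinterp
  rw [hinterp]
  refine sum_congr rfl fun k hk => ?_
  have heval : (Dpoly s a).eval (-(a k)) = ∏ j ∈ s.erase k, (a j - a k + 1) := by
    rw [Dpoly, eval_sub, eval_prod, eval_prod]
    have h0 : ∏ j ∈ s, eval (-(a k)) (X + C (a j)) = 0 :=
      prod_eq_zero hk (by simp)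
    rw [h0, sub_zero, ← Finset.mul_prod_erase _ _ hk]
    have h1 : eval (-(a k)) (X + C (a k + 1)) = 1 := by simp
    rw [h1, one_mul]
    exact prod_congr rfl fun j _ => by simp [eval_add]; ring
  have hbasis : Lagrange.basis s (fun k => -(a k)) k
      = C (∏ j ∈ s.erase k, (a j - a k)⁻¹) * ∏ j ∈ s.erase k, (X + C (a j)) := by
    rw [Lagrange.basis, map_prod, ← prod_mul_distrib]
    refine prod_congr rfl fun j _ => ?_
    rw [Lagrange.basisDivisor]
    congr 1
    · congr 2
      ring
    · rw [map_neg, sub_neg_eq_add]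
  rw [heval, hbasis, ← mul_assoc, ← map_mul]
  congr 2
  rw [wt, ← prod_mul_distrib]
  refine prod_congr rfl fun j hj => ?_
  rw [mem_erase] at hj
  have h1 : (a k - a j - 1) = -(a j - a k + 1) := by ring
  have h2 : (a k - a j) = -(a j - a k) := by ring
  rw [h1, h2, neg_div_neg_eq, div_eq_mul_inv]

lemma wt_sum (s : Finset ℕ) (a : ℕ → ℚ) (ha : Set.InjOn a ↑s) (hs : s.Nonempty) :
    ∑ k ∈ s, wt s a k = s.card := by
  have h := congrArg (fun p => Polynomial.coeff p (s.card - 1)) (lagrange_decomp s a ha)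
  rw [Dpoly_coeff_top s a hs, finset_sum_coeff] at h
  rw [h]
  refine sum_congr rfl fun k hk => ?_
  rw [coeff_C_mul]
  have hcard : (s.erase k).card = s.card - 1 := card_erase_of_mem hk
  rw [show s.card - 1 = (s.erase k).card by omega, prodlin_coeff_card, mul_one]

lemma wt_sum_mul (s : Finset ℕ) (a : ℕ → ℚ) (ha : Set.InjOn a ↑s) (hs : 2 ≤ s.card) :
    ∑ k ∈ s, wt s a k * a k
      = (∑ j ∈ s, a j) - (s.card : ℚ) * ((s.card : ℚ) - 1) / 2 := by
  have h := congrArg (fun p => Polynomial.coeff p (s.card - 2)) (lagrange_decomp s a ha)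
  rw [Dpoly_coeff_second s a hs, finset_sum_coeff] at h
  have hterm : ∀ k ∈ s, (C (wt s a k) * ∏ j ∈ s.erase k, (X + C (a j))).coeff (s.card - 2)
      = wt s a k * ((∑ j ∈ s, a j) - a k) := by
    intro k hk
    rw [coeff_C_mul]
    have hcard : (s.erase k).card = s.card - 1 := card_erase_of_mem hk
    have hne : (s.erase k).Nonempty := Finset.card_pos.mp (by omega)
    rw [show s.card - 2 = (s.erase k).card - 1 by omega, prodlin_coeff_pred _ _ hne,
      Finset.sum_erase_eq_sub hk]
  rw [Finset.sum_congr rfl hterm] at h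
  have hws := wt_sum s a ha (Finset.card_pos.mp (by omega))
  have hexp : ∑ k ∈ s, wt s a k * ((∑ j ∈ s, a j) - a k)
      = (∑ j ∈ s, a j) * (∑ k ∈ s, wt s a k) - ∑ k ∈ s, wt s a k * a k := by
    rw [Finset.mul_sum, ← Finset.sum_sub_distrib]
    exact sum_congr rfl fun k _ => by ring
  rw [hexp, hws] at h
  linarith [h]

end LagrangeSec

section MainPrep
open Polynomial
variable {μ : YoungDiagram} {r q : ℕ}

lemma Hprod_pos (s : Finset (ℕ × ℕ)) : 0 < Hprod s :=
  prod_pos fun c _ => hook_one_le s c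

lemma Aq_lt (μ : YoungDiagram) {i j : ℕ} (hij : i < j) : Aq μ j < Aq μ i := by
  have h := μ.rowLen_anti i j (le_of_lt hij)
  unfold Aq
  have : (μ.rowLen j : ℚ) ≤ (μ.rowLen i : ℚ) := by exact_mod_cast h
  have : (i : ℚ) < j := by exact_mod_cast hij
  linarith

lemma Aq_injOn (μ : YoungDiagram) (s : Set ℕ) : Set.InjOn (Aq μ) s := by
  intro x _ y _ h
  rcases lt_trichotomy x y with hl | he | hl
  · have := Aq_lt μ hl; linarith
  · exact he
  · have := Aq_lt μ hl; linarith

lemma gpoly_cells (μ : YoungDiagram) :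
    gpoly μ.cells = ∏ i ∈ range μ.cells.card, (X + C (Aq μ i)) := by
  rw [gpoly]
  refine prod_congr rfl fun i _ => ?_
  congr 1
  rw [rowLenS_eq]
  unfold Aq
  ring

lemma gpoly_comp (μ : YoungDiagram) :
    (gpoly μ.cells).comp (X + 1) = ∏ i ∈ range μ.cells.card, (X + C (Aq μ i + 1)) := by
  rw [gpoly_cells, Polynomial.prod_comp]
  refine prod_congr rfl fun i _ => ?_
  rw [add_comp, X_comp, C_comp, map_add, map_one]
  ring

lemma card_erase_corner (hc : (r, q) ∈ corners μ.cells) :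
    (μ.cells.erase (r, q)).card = μ.cells.card - 1 :=
  card_erase_of_mem ((YoungDiagram.mem_cells _).mpr (corner_mem hc))

lemma gpoly_erase_corner (hc : (r, q) ∈ corners μ.cells) (hrlt : r < μ.cells.card - 1) :
    gpoly (μ.cells.erase (r, q))
      = (X + C (Aq μ r - 1)) * ∏ j ∈ (range (μ.cells.card - 1)).erase r, (X + C (Aq μ j)) := by
  rw [gpoly, card_erase_corner hc,
    ← Finset.mul_prod_erase _ _ (mem_range.mpr hrlt)]
  congr 1
  · congr 1
    rw [rowLenS_erase hc, if_pos rfl]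
    have hq := corner_rowLen hc
    unfold Aq
    rw [hq]
    push_cast
    ring
  · refine prod_congr rfl fun j hj => ?_
    rw [mem_erase] at hj
    congr 1
    rw [rowLenS_erase hc, if_neg hj.1]
    unfold Aq
    ring

lemma gpoly_erase_last (hc : (r, q) ∈ corners μ.cells) (hre : ∀ j ∈ range (μ.cells.card - 1), j ≠ r) :
    gpoly (μ.cells.erase (r, q)) = ∏ j ∈ range (μ.cells.card - 1), (X + C (Aq μ j)) := by
  rw [gpoly, card_erase_corner hc]
  refine prod_congr rfl fun j hj => ?_
  congr 1
  rw [rowLenS_erase hc, if_neg (hre j hj)]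
  unfold Aq
  ring

lemma wt_zero_of_flat (μ : YoungDiagram) {k : ℕ} (hk : k + 1 < μ.cells.card)
    (hflat : μ.rowLen k = μ.rowLen (k + 1)) :
    wt (range μ.cells.card) (Aq μ) k = 0 := by
  rw [wt]
  refine prod_eq_zero (i := k + 1) ?_ ?_
  · rw [mem_erase, mem_range]
    exact ⟨by omega, hk⟩
  · have : Aq μ k - Aq μ (k + 1) - 1 = 0 := by
      unfold Aq
      rw [hflat]
      push_cast
      ring
    rw [this, zero_div]

lemma hinv_corner (hc : (r, q) ∈ corners μ.cells) :
    (Hprod (μ.cells.erase (r, q)) : ℚ)⁻¹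
      = (Hprod μ.cells : ℚ)⁻¹ * ((Bn μ r : ℚ) * wt (range μ.cells.card) (Aq μ) r) := by
  set n := μ.cells.card with hn
  have hrn : r < n := corner_r_lt_n hc
  have hkey := key_ratio hc
  set P := ∏ l ∈ (range n).erase r, (Aq μ r - Aq μ l) with hP
  set P' := ∏ l ∈ (range n).erase r, (Aq μ r - Aq μ l - 1) with hP'
  have hP0 : P ≠ 0 := by
    rw [hP, prod_ne_zero_iff]
    intro l hl
    rw [mem_erase, mem_range] at hl
    rcases Nat.lt_or_ge r l with h | h
    · have := Aq_lt μ h; intro hcon; linarith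
    · have hlr : l < r := by omega
      have := Aq_lt μ hlr; intro hcon; linarith
  have hwt_eq : wt (range n) (Aq μ) r = P' / P := by
    rw [wt, hP, hP', ← prod_div_distrib]
  have hHν0 : (Hprod μ.cells : ℚ) ≠ 0 := by
    have := Hprod_pos μ.cells
    positivity
  have hHlam0 : (Hprod (μ.cells.erase (r, q)) : ℚ) ≠ 0 := by
    have := Hprod_pos (μ.cells.erase (r, q))
    positivity
  set t : ℚ := (Bn μ r : ℚ) * wt (range n) (Aq μ) r with ht
  have h1 : (Hprod (μ.cells.erase (r, q)) : ℚ) * t = (Hprod μ.cells : ℚ) := by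
    rw [ht, hwt_eq]
    have e1 : (Hprod (μ.cells.erase (r, q)) : ℚ) * ((Bn μ r : ℚ) * (P' / P))
        = ((Hprod (μ.cells.erase (r, q)) : ℚ) * (Bn μ r : ℚ) * P') / P := by ring
    rw [e1, ← hkey, mul_div_cancel_right₀ _ hP0]
  have ht0 : t ≠ 0 := by
    intro h0
    rw [h0, mul_zero] at h1
    exact hHν0 h1.symm
  have h2 : (Hprod μ.cells : ℚ)⁻¹ * t = ((Hprod (μ.cells.erase (r, q)) : ℚ) * t)⁻¹ * t := by
    rw [h1]
  rw [mul_inv, mul_assoc, inv_mul_cancel₀ ht0, mul_one] at h2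
  exact h2.symm

end MainPrep

section MainThm
open Polynomial

lemma range_erase_last (n : ℕ) : (range n).erase (n-1) = range (n-1) := by
  ext k
  rw [mem_erase, mem_range, mem_range]
  omega

lemma sum_corners_eq {M : Type*} [AddCommMonoid M] (s : Finset (ℕ × ℕ)) (t : Finset ℕ)
    (F : ℕ → M) (hinj : ∀ x ∈ s, ∀ y ∈ s, x.1 = y.1 → x = y)
    (hsub : s.image Prod.fst ⊆ t)
    (hvanish : ∀ k ∈ t, k ∉ s.image Prod.fst → F k = 0) :
    ∑ c ∈ s, F c.1 = ∑ k ∈ t, F k :=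
  (Finset.sum_image hinj).symm.trans (Finset.sum_subset hsub hvanish)

/-- Han's theorem: `∑_{λ ∈ ν∖1} g_λ(x)/H_λ = (g_ν(x+1) − g_ν(x))/H_ν`. -/
theorem han_g_function (ν : YoungDiagram) (h : ν.cells.Nonempty) :
    ∑ c ∈ corners ν.cells, (Hprod (ν.cells.erase c) : ℚ)⁻¹ • gpoly (ν.cells.erase c)
      = (Hprod ν.cells : ℚ)⁻¹ •
          ((gpoly ν.cells).comp (Polynomial.X + 1) - gpoly ν.cells) := by
  classical
  set n := ν.cells.card with hn
  have hn1 : 1 ≤ n := Finset.card_pos.mpr h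
  have hκ0 : ν.colLen 0 ≤ n := colLen_le_card ν
  have hsumρ : ∑ i ∈ range n, ν.rowLen i = n := (card_eq_sum_rowLens ν hκ0).symm
  have hRHS : (gpoly ν.cells).comp (Polynomial.X + 1) - gpoly ν.cells
      = Dpoly (range n) (Aq ν) := by
    rw [gpoly_comp, gpoly_cells, Dpoly]
  rw [hRHS, lagrange_decomp (range n) (Aq ν) (Aq_injOn ν _)]
  have hLHS : ∀ c ∈ corners ν.cells,
      (Hprod (ν.cells.erase c) : ℚ)⁻¹ • gpoly (ν.cells.erase c)
        = (Hprod ν.cells : ℚ)⁻¹ •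
            (((Bn ν c.1 : ℚ) * wt (range n) (Aq ν) c.1) • gpoly (ν.cells.erase c)) := by
    intro c hcc
    obtain ⟨r, q⟩ := c
    rw [hinv_corner hcc, mul_smul]
  rw [Finset.sum_congr rfl hLHS, ← Finset.smul_sum]
  congr 1
  -- goal : ∑ over corners of weighted gpoly = Lagrange sum
  by_cases hlast : ν.rowLen (n - 1) = 0
  · -- generic case
    have hn2 : 2 ≤ n := by
      rcases Nat.lt_or_ge n 2 with h2 | h2
      · exfalso
        have hρ0 : 1 ≤ ν.rowLen 0 := by
          obtain ⟨d, hd⟩ := h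
          have hd' : (0, 0) ∈ ν :=
            ν.up_left_mem (Nat.zero_le _) (Nat.zero_le _) ((YoungDiagram.mem_cells _).mp hd)
          have := YoungDiagram.mem_iff_lt_rowLen.mp hd'
          omega
        have he : n - 1 = 0 := by omega
        rw [he] at hlast
        omega
      · exact h2
    have han1 : Aq ν (n-1) = -(n:ℚ) := by
      unfold Aq
      rw [hlast, Nat.cast_sub (by omega : 1 ≤ n)]
      push_cast
      ring
    have hrow_lt : ∀ r q, (r, q) ∈ corners ν.cells → r < n - 1 := by
      intro r q hc
      have h1 := corner_r_lt_n hc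
      have h2 := corner_rowLen hc
      by_contra hcon
      have he : r = n - 1 := by omega
      rw [he, hlast] at h2
      omega
    have hvan : ∀ k ∈ range (n-1), k ∉ (corners ν.cells).image Prod.fst →
        wt (range n) (Aq ν) k = 0 := by
      intro k hk hkim
      rw [mem_range] at hk
      by_cases hflat : ν.rowLen k = ν.rowLen (k+1)
      · exact wt_zero_of_flat ν (by omega) hflat
      · exfalso
        apply hkim
        have hlt : ν.rowLen (k+1) < ν.rowLen k :=
          lt_of_le_of_ne (ν.rowLen_anti k (k+1) (by omega)) (fun hh => hflat hh.symm)
        refine mem_image.mpr ⟨(k, ν.rowLen k - 1), ?_, rfl⟩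
        rw [corner_iff]
        refine ⟨?_, ?_, ?_⟩
        · exact YoungDiagram.mem_iff_lt_rowLen.mpr (by omega)
        · intro hmem
          have := YoungDiagram.mem_iff_lt_rowLen.mp hmem
          simp only at this
          omega
        · intro hmem
          have := YoungDiagram.mem_iff_lt_rowLen.mp hmem
          simp only at this
          omega
    have hinjc : ∀ x ∈ corners ν.cells, ∀ y ∈ corners ν.cells, x.1 = y.1 → x = y := by
      intro x hx y hy hxy
      obtain ⟨r1, q1⟩ := x
      obtain ⟨r2, q2⟩ := y
      simp only at hxy
      subst hxy
      have e1 := corner_rowLen hx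
      have e2 := corner_rowLen hy
      rw [Prod.mk.injEq]
      exact ⟨rfl, by omega⟩
    have himgsub : (corners ν.cells).image Prod.fst ⊆ range (n-1) := by
      intro k hk
      obtain ⟨c, hcc, rfl⟩ := mem_image.mp hk
      obtain ⟨r, q⟩ := c
      exact mem_range.mpr (hrow_lt r q hcc)
    -- per-corner split
    have hsplitC : ∀ c ∈ corners ν.cells,
        ((Bn ν c.1 : ℚ) * wt (range n) (Aq ν) c.1) • gpoly (ν.cells.erase c)
          = C (wt (range n) (Aq ν) c.1) * (∏ j ∈ (range n).erase c.1, (X + C (Aq ν j)))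
            + (wt (range n) (Aq ν) c.1 * (Aq ν c.1 + (n:ℚ) - 1)) •
                (∏ j ∈ range (n-1), (X + C (Aq ν j))) := by
      intro c hcc
      obtain ⟨r, q⟩ := c
      simp only [Prod.fst]
      have hrlt : r < n - 1 := hrow_lt r q hcc
      have hBr : (Bn ν r : ℚ) = Aq ν r + n := by
        unfold Bn Aq
        rw [Nat.cast_add, Nat.cast_sub (by omega : r ≤ n - 1), Nat.cast_sub (by omega : 1 ≤ n)]
        push_cast
        ring
      have hmem1 : n - 1 ∈ (range n).erase r := by
        rw [mem_erase, mem_range]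
        omega
      rw [gpoly_erase_corner hcc hrlt,
        ← Finset.mul_prod_erase _ _ hmem1, Finset.erase_right_comm, range_erase_last, han1,
        ← Finset.mul_prod_erase _ (fun j => X + C (Aq ν j)) (mem_range.mpr hrlt), hBr,
        smul_eq_C_mul, smul_eq_C_mul]
      simp only [map_mul, map_add, map_sub, map_one, map_neg, map_natCast]
      ring
    rw [Finset.sum_congr rfl hsplitC, Finset.sum_add_distrib, ← Finset.sum_smul]
    -- part 1
    have hpart1 : (∑ c ∈ corners ν.cells, C (wt (range n) (Aq ν) c.1) *
          (∏ j ∈ (range n).erase c.1, (X + C (Aq ν j))))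
        = ∑ k ∈ range (n-1), C (wt (range n) (Aq ν) k) *
            (∏ j ∈ (range n).erase k, (X + C (Aq ν j))) := by
      refine sum_corners_eq _ _
        (fun k => C (wt (range n) (Aq ν) k) * ∏ j ∈ (range n).erase k, (X + C (Aq ν j)))
        hinjc himgsub fun k hk hkim => ?_
      rw [hvan k hk hkim, map_zero, zero_mul]
    -- part 2 scalar
    have hpart2 : (∑ c ∈ corners ν.cells, wt (range n) (Aq ν) c.1 * (Aq ν c.1 + (n:ℚ) - 1))
        = ∑ k ∈ range (n-1), wt (range n) (Aq ν) k * (Aq ν k + (n:ℚ) - 1) := by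
      refine sum_corners_eq _ _
        (fun k => wt (range n) (Aq ν) k * (Aq ν k + (n:ℚ) - 1))
        hinjc himgsub fun k hk hkim => ?_
      rw [hvan k hk hkim, zero_mul]
    have hsa : ∑ j ∈ range n, Aq ν j = -(n:ℚ) * ((n:ℚ) - 1) / 2 := by
      unfold Aq
      rw [Finset.sum_sub_distrib, Finset.sum_sub_distrib]
      have e1 : ∑ i ∈ range n, (ν.rowLen i : ℚ) = (n : ℚ) := by
        rw [← Nat.cast_sum, hsumρ]
      have e2 : ∑ i ∈ range n, (i : ℚ) = (n : ℚ) * ((n:ℚ) - 1) / 2 := by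
        have h3 := Finset.sum_range_id_mul_two n
        have h4 := congrArg (Nat.cast : ℕ → ℚ) h3
        push_cast [Nat.cast_sub (by omega : 1 ≤ n)] at h4
        linarith
      rw [e1, e2, Finset.sum_const, card_range, nsmul_eq_mul]
      ring
    have hscal : ∑ k ∈ range (n-1), wt (range n) (Aq ν) k * (Aq ν k + (n:ℚ) - 1)
        = wt (range n) (Aq ν) (n-1) := by
      have hws := wt_sum (range n) (Aq ν) (Aq_injOn ν _)
        (Finset.nonempty_range_iff.mpr (by omega))
      have hwm := wt_sum_mul (range n) (Aq ν) (Aq_injOn ν _) (by rw [card_range]; omega)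
      rw [card_range] at hws hwm
      rw [hsa] at hwm
      have htot : ∑ k ∈ range n, wt (range n) (Aq ν) k * (Aq ν k + (n:ℚ) - 1) = 0 := by
        have e3 : ∀ k ∈ range n, wt (range n) (Aq ν) k * (Aq ν k + (n:ℚ) - 1)
            = wt (range n) (Aq ν) k * Aq ν k + wt (range n) (Aq ν) k * ((n:ℚ) - 1) := by
          intro k _
          ring
        rw [Finset.sum_congr rfl e3, Finset.sum_add_distrib, hwm, ← Finset.sum_mul, hws]
        ring
      have hsplit2 : ∑ k ∈ (range n).erase (n-1), wt (range n) (Aq ν) k * (Aq ν k + (n:ℚ) - 1)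
            + wt (range n) (Aq ν) (n-1) * (Aq ν (n-1) + (n:ℚ) - 1)
          = ∑ k ∈ range n, wt (range n) (Aq ν) k * (Aq ν k + (n:ℚ) - 1) :=
        Finset.sum_erase_add _ _ (mem_range.mpr (by omega))
      rw [range_erase_last] at hsplit2
      rw [htot, han1] at hsplit2
      have : wt (range n) (Aq ν) (n-1) * (-(n:ℚ) + (n:ℚ) - 1) = -wt (range n) (Aq ν) (n-1) := by
        ring
      rw [this] at hsplit2
      linarith
    rw [hpart1, hpart2, hscal]
    -- split RHS
    have hRsplit : ∑ k ∈ range n, C (wt (range n) (Aq ν) k) *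
          (∏ j ∈ (range n).erase k, (X + C (Aq ν j)))
        = (∑ k ∈ range (n-1), C (wt (range n) (Aq ν) k) *
            (∏ j ∈ (range n).erase k, (X + C (Aq ν j))))
          + C (wt (range n) (Aq ν) (n-1)) *
              (∏ j ∈ range (n-1), (X + C (Aq ν j))) := by
      rw [← Finset.sum_erase_add (range n) _ (mem_range.mpr (show n - 1 < n by omega)),
        range_erase_last]
    rw [hRsplit, smul_eq_C_mul]
  · -- column case : all rows have length 1
    have hall1 : ∀ i, i < n → ν.rowLen i = 1 := by
      have hge : ∀ i ∈ range n, 1 ≤ ν.rowLen i := by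
        intro i hi
        rw [mem_range] at hi
        have := ν.rowLen_anti i (n-1) (by omega)
        omega
      by_contra hcon
      push_neg at hcon
      obtain ⟨i0, hi0, hne⟩ := hcon
      have hlt : ∀ i ∈ range n, (fun _ => 1) i ≤ ν.rowLen i := hge
      have : (∑ _i ∈ range n, 1) < ∑ i ∈ range n, ν.rowLen i := by
        refine Finset.sum_lt_sum hlt ⟨i0, mem_range.mpr hi0, ?_⟩
        have := hge i0 (mem_range.mpr hi0)
        omega
      rw [hsumρ, Finset.sum_const, card_range, smul_eq_mul, mul_one] at this
      omega
    have hρn0 : ν.rowLen (n-1) = 1 := hall1 (n-1) (by omega)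
    have hcorners : corners ν.cells = {(n-1, 0)} := by
      ext c
      obtain ⟨i, j⟩ := c
      rw [mem_singleton, corner_iff, Prod.mk.injEq]
      constructor
      · rintro ⟨h1, h2, h3⟩
        have hi1 := YoungDiagram.mem_iff_lt_rowLen.mp h1
        have hin : i < n := by
          have := YoungDiagram.mem_iff_lt_colLen.mp h1
          have := ν.colLen_anti 0 j (Nat.zero_le j)
          omega
        have hj0 : j = 0 := by
          have := hall1 i hin
          omega
        subst hj0
        constructor
        · by_contra hcon
          have hi2 : i + 1 < n := by omega
          exact h2 (YoungDiagram.mem_iff_lt_rowLen.mpr (by rw [hall1 (i+1) hi2]; omega))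
        · rfl
      · rintro ⟨rfl, rfl⟩
        refine ⟨YoungDiagram.mem_iff_lt_rowLen.mpr (by omega), ?_, ?_⟩
        · intro hmem
          have := YoungDiagram.mem_iff_lt_colLen.mp hmem
          simp only at this
          omega
        · intro hmem
          have := YoungDiagram.mem_iff_lt_rowLen.mp hmem
          simp only at this
          omega
    have hc0 : (n-1, 0) ∈ corners ν.cells := by
      rw [hcorners]
      exact mem_singleton_self _
    rw [hcorners, Finset.sum_singleton]
    have hB1 : (Bn ν (n-1) : ℚ) = 1 := by
      unfold Bn
      rw [hρn0, show n - 1 - (n-1) = 0 by omega]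
      norm_num
    have hwt0 : ∀ k, k ∈ range n → k ≠ n - 1 →
        C (wt (range n) (Aq ν) k) * (∏ j ∈ (range n).erase k, (X + C (Aq ν j))) = 0 := by
      intro k hk hkne
      rw [mem_range] at hk
      rw [wt_zero_of_flat ν (by omega) (by rw [hall1 k (by omega), hall1 (k+1) (by omega)])]
      rw [map_zero, zero_mul]
    rw [Finset.sum_eq_single (n-1) hwt0 (fun hne => absurd (mem_range.mpr (by omega)) hne)]
    simp only [Prod.fst]
    rw [gpoly_erase_last hc0 (fun j hj => by rw [mem_range] at hj; omega), hB1, one_mul,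
      range_erase_last, smul_eq_C_mul]
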